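/- The Gelfand order Λ is self-opposite: there exists a k-algebra isomorphism ψ : Λ → Λᵒᵖ which fixes the diagonal matrix units E₁₁, E₂₂, E₃₃ and satisfies ψ(E₂₁) = t·E₁₂, ψ(t·E₁₂) = E₂₁, ψ(E₃₁) = t·E₁₃ and ψ(t·E₁₃) = E₃₁, the elements on the right being regarded in the opposite algebra Λᵒᵖ. -/

import Mathlib

set_option maxHeartbeats 1600000
set_option synthInstance.maxHeartbeats 400000

noncomputable section

variable (k : Type) [Field k]

/-- The maximal ideal `m = (t)` of `R = k⟦t⟧`. -/
def mIdeal : Ideal (PowerSeries k) :=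
  Ideal.span {PowerSeries.X}

lemma X_mem_mIdeal : (PowerSeries.X : PowerSeries k) ∈ mIdeal k :=
  Ideal.subset_span rfl

/-- The Gelfand order `Λ ⊆ M₃(k⟦t⟧)`: all matrices `A` with
`A₁₂, A₁₃, A₂₃, A₃₂ ∈ m`. -/
def gelfandOrder : Subalgebra k (Matrix (Fin 3) (Fin 3) (PowerSeries k)) where
  carrier := {A | A 0 1 ∈ mIdeal k ∧ A 0 2 ∈ mIdeal k ∧ A 1 2 ∈ mIdeal k ∧ A 2 1 ∈ mIdeal k}
  zero_mem' := ⟨zero_mem _, zero_mem _, zero_mem _, zero_mem _⟩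
  one_mem' := by
    refine ⟨?_, ?_, ?_, ?_⟩ <;>
    · rw [Matrix.one_apply_ne (by decide)]
      exact zero_mem _
  add_mem' := by
    rintro a b ⟨ha1, ha2, ha3, ha4⟩ ⟨hb1, hb2, hb3, hb4⟩
    exact ⟨add_mem ha1 hb1, add_mem ha2 hb2, add_mem ha3 hb3, add_mem ha4 hb4⟩
  mul_mem' := by
    rintro a b ⟨ha1, ha2, ha3, ha4⟩ ⟨hb1, hb2, hb3, hb4⟩
    refine ⟨?_, ?_, ?_, ?_⟩ <;>
      simp only [Set.mem_setOf_eq, Matrix.mul_apply, Fin.sum_univ_three]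
    · exact add_mem (add_mem (Ideal.mul_mem_left _ _ hb1) (Ideal.mul_mem_right _ _ ha1))
        (Ideal.mul_mem_left _ _ hb4)
    · exact add_mem (add_mem (Ideal.mul_mem_left _ _ hb2) (Ideal.mul_mem_left _ _ hb3))
        (Ideal.mul_mem_right _ _ ha2)
    · exact add_mem (add_mem (Ideal.mul_mem_left _ _ hb2) (Ideal.mul_mem_left _ _ hb3))
        (Ideal.mul_mem_right _ _ ha3)
    · exact add_mem (add_mem (Ideal.mul_mem_left _ _ hb1) (Ideal.mul_mem_right _ _ ha4))
        (Ideal.mul_mem_left _ _ hb4)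
  algebraMap_mem' := by
    intro r
    refine ⟨?_, ?_, ?_, ?_⟩ <;>
    · rw [Matrix.algebraMap_matrix_apply, if_neg (by decide)]
      exact zero_mem _

/-- The matrix unit `E₁₁ ∈ Λ`. -/
def E11 : ↥(gelfandOrder k) :=
  ⟨Matrix.single 0 0 (1 : PowerSeries k), by
    refine ⟨?_, ?_, ?_, ?_⟩ <;>
    · rw [Matrix.single_apply_of_ne]; rotate_left; decide
      exact zero_mem _⟩

/-- The matrix unit `E₂₂ ∈ Λ`. -/
def E22 : ↥(gelfandOrder k) :=
  ⟨Matrix.single 1 1 (1 : PowerSeries k), by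
    refine ⟨?_, ?_, ?_, ?_⟩ <;>
    · rw [Matrix.single_apply_of_ne]; rotate_left; decide
      exact zero_mem _⟩

/-- The matrix unit `E₃₃ ∈ Λ`. -/
def E33 : ↥(gelfandOrder k) :=
  ⟨Matrix.single 2 2 (1 : PowerSeries k), by
    refine ⟨?_, ?_, ?_, ?_⟩ <;>
    · rw [Matrix.single_apply_of_ne]; rotate_left; decide
      exact zero_mem _⟩

/-- The matrix unit `E₂₁ ∈ Λ`. -/
def E21 : ↥(gelfandOrder k) :=
  ⟨Matrix.single 1 0 (1 : PowerSeries k), by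
    refine ⟨?_, ?_, ?_, ?_⟩ <;>
    · rw [Matrix.single_apply_of_ne]; rotate_left; decide
      exact zero_mem _⟩

/-- The matrix unit `E₃₁ ∈ Λ`. -/
def E31 : ↥(gelfandOrder k) :=
  ⟨Matrix.single 2 0 (1 : PowerSeries k), by
    refine ⟨?_, ?_, ?_, ?_⟩ <;>
    · rw [Matrix.single_apply_of_ne]; rotate_left; decide
      exact zero_mem _⟩

/-- The element `t·E₁₂ ∈ Λ`. -/
def tE12 : ↥(gelfandOrder k) :=
  ⟨Matrix.single 0 1 (PowerSeries.X : PowerSeries k), by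
    refine ⟨?_, ?_, ?_, ?_⟩
    · rw [Matrix.single_apply_same]
      exact X_mem_mIdeal k
    · rw [Matrix.single_apply_of_ne]; rotate_left; decide
      exact zero_mem _
    · rw [Matrix.single_apply_of_ne]; rotate_left; decide
      exact zero_mem _
    · rw [Matrix.single_apply_of_ne]; rotate_left; decide
      exact zero_mem _⟩

/-- The element `t·E₁₃ ∈ Λ`. -/
def tE13 : ↥(gelfandOrder k) :=
  ⟨Matrix.single 0 2 (PowerSeries.X : PowerSeries k), by
    refine ⟨?_, ?_, ?_, ?_⟩
    · rw [Matrix.single_apply_of_ne]; rotate_left; decide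
      exact zero_mem _
    · rw [Matrix.single_apply_same]
      exact X_mem_mIdeal k
    · rw [Matrix.single_apply_of_ne]; rotate_left; decide
      exact zero_mem _
    · rw [Matrix.single_apply_of_ne]; rotate_left; decide
      exact zero_mem _⟩

/-! ### Auxiliary machinery -/

/-- Division by `X` (via choice), used to build the anti-automorphism. -/
noncomputable def divX' (f : PowerSeries k) : PowerSeries k :=
  letI := Classical.dec ((PowerSeries.X : PowerSeries k) ∣ f)
  if h : (PowerSeries.X : PowerSeries k) ∣ f then h.choose else 0

lemma X_mul_divX' {f : PowerSeries k} (h : (PowerSeries.X : PowerSeries k) ∣ f) :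
    (PowerSeries.X : PowerSeries k) * divX' k f = f := by
  unfold divX'; rw [dif_pos h]; exact h.choose_spec.symm

lemma divX'_X_mul (g : PowerSeries k) :
    divX' k ((PowerSeries.X : PowerSeries k) * g) = g :=
  mul_left_cancel₀ PowerSeries.X_ne_zero (X_mul_divX' k ⟨g, rfl⟩)

lemma divX'_zero : divX' k 0 = 0 := by
  simpa using divX'_X_mul k 0

lemma divX'_X : divX' k PowerSeries.X = 1 := by
  simpa using divX'_X_mul k 1

lemma divX'_eq {f g : PowerSeries k} (h : f = PowerSeries.X * g) : divX' k f = g :=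
  h ▸ divX'_X_mul k g

lemma mem_gelfandOrder_iff (A : Matrix (Fin 3) (Fin 3) (PowerSeries k)) :
    A ∈ gelfandOrder k ↔
      A 0 1 ∈ mIdeal k ∧ A 0 2 ∈ mIdeal k ∧ A 1 2 ∈ mIdeal k ∧ A 2 1 ∈ mIdeal k :=
  Iff.rfl

lemma mem_mIdeal_iff (f : PowerSeries k) :
    f ∈ mIdeal k ↔ (PowerSeries.X : PowerSeries k) ∣ f :=
  Ideal.mem_span_singleton

/-- The underlying matrix map of the anti-automorphism. -/
noncomputable def PhiG (A : Matrix (Fin 3) (Fin 3) (PowerSeries k)) :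
    Matrix (Fin 3) (Fin 3) (PowerSeries k) :=
  !![A 0 0, PowerSeries.X * A 1 0, PowerSeries.X * A 2 0;
     divX' k (A 0 1), A 1 1, A 2 1;
     divX' k (A 0 2), A 1 2, A 2 2]

lemma PhiG_mem {A : Matrix (Fin 3) (Fin 3) (PowerSeries k)} (hA : A ∈ gelfandOrder k) :
    PhiG k A ∈ gelfandOrder k := by
  obtain ⟨h1, h2, h3, h4⟩ := (mem_gelfandOrder_iff k A).mp hA
  refine (mem_gelfandOrder_iff k _).mpr ⟨?_, ?_, ?_, ?_⟩ <;>
    simp only [PhiG, Matrix.cons_val', Matrix.cons_val_zero, Matrix.cons_val_one,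
      Matrix.head_cons, Matrix.empty_val', Matrix.cons_val_fin_one, Matrix.head_fin_const,
      Matrix.cons_val_two, Matrix.tail_cons, Matrix.of_apply]
  · exact (mem_mIdeal_iff k _).mpr ⟨A 1 0, rfl⟩
  · exact (mem_mIdeal_iff k _).mpr ⟨A 2 0, rfl⟩
  · exact h4
  · exact h3

lemma PhiG_PhiG {A : Matrix (Fin 3) (Fin 3) (PowerSeries k)} (hA : A ∈ gelfandOrder k) :
    PhiG k (PhiG k A) = A := by
  obtain ⟨h1, h2, h3, h4⟩ := (mem_gelfandOrder_iff k A).mp hA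
  obtain ⟨a1, ha1⟩ := (mem_mIdeal_iff k _).mp h1
  obtain ⟨a2, ha2⟩ := (mem_mIdeal_iff k _).mp h2
  refine Matrix.ext fun i j => ?_
  fin_cases i <;> fin_cases j <;>
    simp [PhiG, ha1, ha2, divX'_X_mul]

lemma PhiG_mul {A B : Matrix (Fin 3) (Fin 3) (PowerSeries k)}
    (hA : A ∈ gelfandOrder k) (hB : B ∈ gelfandOrder k) :
    PhiG k (A * B) = PhiG k B * PhiG k A := by
  obtain ⟨hA1, hA2, hA3, hA4⟩ := (mem_gelfandOrder_iff k A).mp hA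
  obtain ⟨hB1, hB2, hB3, hB4⟩ := (mem_gelfandOrder_iff k B).mp hB
  obtain ⟨a1, ha1⟩ := (mem_mIdeal_iff k _).mp hA1
  obtain ⟨a2, ha2⟩ := (mem_mIdeal_iff k _).mp hA2
  obtain ⟨b1, hb1⟩ := (mem_mIdeal_iff k _).mp hB1
  obtain ⟨b2, hb2⟩ := (mem_mIdeal_iff k _).mp hB2
  refine Matrix.ext fun i j => ?_
  fin_cases i <;> fin_cases j <;>
    simp [PhiG, Matrix.mul_apply, Fin.sum_univ_three, ha1, ha2, hb1, hb2, divX'_X_mul] <;>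
  first
  | ring1
  | (exact divX'_eq k (by ring1))

lemma PhiG_add (A B : Matrix (Fin 3) (Fin 3) (PowerSeries k))
    (hA : A ∈ gelfandOrder k) (hB : B ∈ gelfandOrder k) :
    PhiG k (A + B) = PhiG k A + PhiG k B := by
  obtain ⟨hA1, hA2, hA3, hA4⟩ := (mem_gelfandOrder_iff k A).mp hA
  obtain ⟨hB1, hB2, hB3, hB4⟩ := (mem_gelfandOrder_iff k B).mp hB
  obtain ⟨a1, ha1⟩ := (mem_mIdeal_iff k _).mp hA1
  obtain ⟨a2, ha2⟩ := (mem_mIdeal_iff k _).mp hA2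
  obtain ⟨b1, hb1⟩ := (mem_mIdeal_iff k _).mp hB1
  obtain ⟨b2, hb2⟩ := (mem_mIdeal_iff k _).mp hB2
  refine Matrix.ext fun i j => ?_
  fin_cases i <;> fin_cases j <;>
    simp [PhiG, ha1, ha2, hb1, hb2, divX'_X_mul] <;>
  first
  | ring1
  | (exact divX'_eq k (by ring1))

lemma PhiG_algebraMap (r : k) :
    PhiG k (algebraMap k (Matrix (Fin 3) (Fin 3) (PowerSeries k)) r) =
      algebraMap k (Matrix (Fin 3) (Fin 3) (PowerSeries k)) r := by
  refine Matrix.ext fun i j => ?_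
  fin_cases i <;> fin_cases j <;>
    simp [PhiG, Matrix.algebraMap_matrix_apply, divX'_zero, Matrix.vecHead, Matrix.vecTail]

/-- The Gelfand order is self-opposite: there is a `k`-algebra
isomorphism `ψ : Λ → Λᵒᵖ` fixing the diagonal matrix units `E₁₁, E₂₂, E₃₃` and
satisfying `ψ(E₂₁) = t·E₁₂`, `ψ(t·E₁₂) = E₂₁`, `ψ(E₃₁) = t·E₁₃`, `ψ(t·E₁₃) = E₃₁`. -/
theorem gelfandOrder_self_opposite :
    ∃ ψ : (↥(gelfandOrder k)) ≃ₐ[k] (↥(gelfandOrder k))ᵐᵒᵖ,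
      ψ (E11 k) = MulOpposite.op (E11 k) ∧
      ψ (E22 k) = MulOpposite.op (E22 k) ∧
      ψ (E33 k) = MulOpposite.op (E33 k) ∧
      ψ (E21 k) = MulOpposite.op (tE12 k) ∧
      ψ (tE12 k) = MulOpposite.op (E21 k) ∧
      ψ (E31 k) = MulOpposite.op (tE13 k) ∧
      ψ (tE13 k) = MulOpposite.op (E31 k) := by
    classical
  refine ⟨{ toFun := fun A => MulOpposite.op ⟨PhiG k A.1, PhiG_mem k A.2⟩
            invFun := fun B => ⟨PhiG k (MulOpposite.unop B).1, PhiG_mem k (MulOpposite.unop B).2⟩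
            left_inv := fun A => Subtype.ext (PhiG_PhiG k A.2)
            right_inv := fun B => MulOpposite.unop_injective (Subtype.ext (PhiG_PhiG k (MulOpposite.unop B).2))
            map_mul' := fun A B => MulOpposite.unop_injective (Subtype.ext (PhiG_mul k A.2 B.2))
            map_add' := fun A B => MulOpposite.unop_injective (Subtype.ext (PhiG_add k A.1 B.1 A.2 B.2))
            commutes' := fun r => MulOpposite.unop_injective (Subtype.ext (PhiG_algebraMap k r)) },
        ?_, ?_, ?_, ?_, ?_, ?_, ?_⟩ <;>
  · refine MulOpposite.unop_injective (Subtype.ext ?_)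
    show PhiG k _ = _
    refine Matrix.ext fun i j => ?_
    fin_cases i <;> fin_cases j <;>
      simp [PhiG, E11, E22, E33, E21, E31, tE12, tE13, Matrix.single,
        divX'_zero, divX'_X, Matrix.vecHead, Matrix.vecTail]
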